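/- Let F and H be distribution functions on ℝ with F(x) < 1 and H(x) < 1 for all x ∈ ℝ, and let μ > 0. Suppose (1 − H(x)) / (μ(1 − F(x))) → 1 as x → ∞. Then sup_{x∈ℝ} |H(x)^{n/μ} − F(x)^n| → 0 as n → ∞; that is, the distribution functions G := H^{1/μ} and F are strictly tail-equivalent. -/

import Mathlib

open Filter

private lemma aux_exp_diff (a b : ℝ) :
    |Real.exp (-a) - Real.exp (-b)| ≤ |a - b| * Real.exp (-(min a b)) := by
  wlog h : a ≤ b generalizing a b
  · rw [abs_sub_comm, abs_sub_comm a b, min_comm]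
    exact this b a (le_of_not_ge h)
  rw [min_eq_left h]
  have h1 : Real.exp (-b) ≤ Real.exp (-a) := Real.exp_le_exp.2 (neg_le_neg h)
  rw [abs_of_nonneg (sub_nonneg.2 h1), abs_of_nonpos (by linarith : a - b ≤ 0)]
  have h2 : Real.exp (-b) = Real.exp (-a) * Real.exp (a - b) := by
    rw [← Real.exp_add]; ring_nf
  nlinarith [Real.add_one_le_exp (a - b), Real.exp_pos (-a)]

private lemma aux_self_exp (s : ℝ) (hs : 0 ≤ s) : s * Real.exp (-(s / 2)) ≤ 2 := by
  rw [Real.exp_neg, ← div_eq_mul_inv, div_le_iff₀ (Real.exp_pos _)]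
  nlinarith [Real.add_one_le_exp (s / 2)]

private lemma aux_log_bounds (t : ℝ) (ht : 0 < t) (ht2 : t ≤ 1 / 2) :
    t ≤ -Real.log (1 - t) ∧ -Real.log (1 - t) ≤ t + 2 * t ^ 2 := by
  have h1 : 0 < 1 - t := by linarith
  constructor
  · have := Real.log_le_sub_one_of_pos h1
    linarith
  · have h2 := Real.log_le_sub_one_of_pos (inv_pos.2 h1)
    rw [Real.log_inv] at h2
    have h3 : (1 - t)⁻¹ - 1 = t / (1 - t) := by field_simp; ring
    rw [h3] at h2
    rw [le_div_iff₀ h1] at h2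
    nlinarith

set_option maxHeartbeats 2000000 in
/-- If `F` and `H` are distribution functions with `F(x) < 1`, `H(x) < 1`
for all `x`, `μ > 0`, and `(1 - H(x)) / (μ (1 - F(x))) → 1` as `x → ∞`, then
`sup_x |H(x)^{n/μ} - F(x)^n| → 0` as `n → ∞`, i.e. `H^{1/μ}` and `F` are strictly
tail-equivalent. -/
theorem strictly_tail_equivalent_of_tail_ratio
    (F H : ℝ → ℝ)
    (hFmono : Monotone F) (hHmono : Monotone H)
    (hFrc : ∀ x, ContinuousWithinAt F (Set.Ici x) x)
    (hHrc : ∀ x, ContinuousWithinAt H (Set.Ici x) x)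
    (hFbot : Tendsto F atBot (nhds 0)) (hFtop : Tendsto F atTop (nhds 1))
    (hHbot : Tendsto H atBot (nhds 0)) (hHtop : Tendsto H atTop (nhds 1))
    (hFlt : ∀ x, F x < 1) (hHlt : ∀ x, H x < 1)
    (μ : ℝ) (hμ : 0 < μ)
    (htail : Tendsto (fun x => (1 - H x) / (μ * (1 - F x))) atTop (nhds 1)) :
    Tendsto (fun n : ℕ => ⨆ x : ℝ, |H x ^ ((n : ℝ) / μ) - F x ^ n|) atTop (nhds 0) := by
  -- nonnegativity of F, H
  have hF0 : ∀ x, 0 ≤ F x := fun x =>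
    le_of_tendsto hFbot (eventually_atBot.2 ⟨x, fun y hy => hFmono hy⟩)
  have hH0 : ∀ x, 0 ≤ H x := fun x =>
    le_of_tendsto hHbot (eventually_atBot.2 ⟨x, fun y hy => hHmono hy⟩)
  rw [Metric.tendsto_atTop]
  intro ε hε
  set δ : ℝ := min (1 / 2) (ε / 25) with hδdef
  have hδ0 : 0 < δ := lt_min (by norm_num) (by linarith)
  have hδh : δ ≤ 1 / 2 := min_le_left _ _
  have hδε : δ ≤ ε / 25 := min_le_right _ _
  -- choose M
  obtain ⟨M₁, hM₁⟩ := Metric.tendsto_atTop.1 htail δ hδ0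
  obtain ⟨M₂, hM₂⟩ := Metric.tendsto_atTop.1 hFtop δ hδ0
  obtain ⟨M₃, hM₃⟩ := Metric.tendsto_atTop.1 hHtop δ hδ0
  set M : ℝ := max M₁ (max M₂ M₃) with hMdef
  have hFM : 1 - F M ≤ δ := by
    have := hM₂ M (le_trans (le_max_left _ _) (le_max_right _ _))
    rw [Real.dist_eq] at this
    have := abs_lt.1 this
    linarith [this.1]
  have hHM : 1 - H M ≤ δ := by
    have := hM₃ M (le_trans (le_max_right _ _) (le_max_right _ _))
    rw [Real.dist_eq] at this
    have := abs_lt.1 this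
    linarith [this.1]
  have hrat : ∀ x, M ≤ x → |(1 - H x) / (μ * (1 - F x)) - 1| ≤ δ := by
    intro x hx
    have := hM₁ x (le_trans (le_max_left _ _) hx)
    rw [Real.dist_eq] at this
    exact this.le
  -- main uniform bound for x ≥ M
  have key : ∀ (n : ℕ) (x : ℝ), M ≤ x → |H x ^ ((n : ℝ) / μ) - F x ^ n| ≤ 12 * δ := by
    intro n x hx
    set u : ℝ := 1 - F x with hu
    set v : ℝ := 1 - H x with hv
    have hu0 : 0 < u := by have := hFlt x; simp only [hu]; linarith
    have hv0 : 0 < v := by have := hHlt x; simp only [hv]; linarith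
    have huδ : u ≤ δ := by
      have := hFmono hx
      simp only [hu]; linarith [hFM]
    have hvδ : v ≤ δ := by
      have := hHmono hx
      simp only [hv]; linarith [hHM]
    have huh : u ≤ 1 / 2 := le_trans huδ hδh
    have hvh : v ≤ 1 / 2 := le_trans hvδ hδh
    have hFx : 0 < F x := by simp only [hu] at huh ⊢; linarith
    have hHx : 0 < H x := by simp only [hv] at hvh ⊢; linarith
    -- ratio bound
    have hr := hrat x hx
    have hvu : |v / μ - u| ≤ δ * u := by
      have heq : v / μ - u = ((1 - H x) / (μ * (1 - F x)) - 1) * u := by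
        have hFne : (1 - F x) ≠ 0 := (sub_pos.2 (hFlt x)).ne'
        have hμne : μ ≠ 0 := hμ.ne'
        rw [hu, hv]
        field_simp
      rw [heq, abs_mul, abs_of_pos hu0]
      exact mul_le_mul_of_nonneg_right hr hu0.le
    have hvu' := abs_le.1 hvu
    -- log bounds
    have hFxu : (1 : ℝ) - u = F x := by simp only [hu]; ring
    have hHxv : (1 : ℝ) - v = H x := by simp only [hv]; ring
    obtain ⟨hL1, hL2⟩ := aux_log_bounds u hu0 huh
    obtain ⟨hK1, hK2⟩ := aux_log_bounds v hv0 hvh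
    rw [hFxu] at hL1 hL2
    rw [hHxv] at hK1 hK2
    set L : ℝ := -Real.log (F x) with hLdef
    set K : ℝ := -Real.log (H x) with hKdef
    set a : ℝ := (n : ℝ) * L with hadef
    set b : ℝ := ((n : ℝ) / μ) * K with hbdef
    have hn0 : (0 : ℝ) ≤ (n : ℝ) := Nat.cast_nonneg n
    have ha : F x ^ n = Real.exp (-a) := by
      rw [hadef, hLdef]
      rw [show -((n : ℝ) * -Real.log (F x)) = (n : ℝ) * Real.log (F x) by ring]
      rw [Real.exp_nat_mul, Real.exp_log hFx]
    have hb : H x ^ ((n : ℝ) / μ) = Real.exp (-b) := by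
      rw [Real.rpow_def_of_pos hHx, hbdef, hKdef]
      congr 1
      ring
    rw [ha, hb]
    -- bounds on K/μ
    have hKμ1 : v / μ ≤ K / μ := by gcongr
    have hKμ2 : K / μ ≤ v / μ + 2 * v * (v / μ) := by
      have : K / μ ≤ (v + 2 * v ^ 2) / μ := by gcongr
      calc K / μ ≤ (v + 2 * v ^ 2) / μ := this
        _ = v / μ + 2 * v * (v / μ) := by ring
    have hQu1 : u - δ * u ≤ v / μ := by linarith [hvu'.1]
    have hQu2 : v / μ ≤ u + δ * u := by linarith [hvu'.2]
    have hvμ : 0 < v / μ := div_pos hv0 hμ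
    -- |b - a| ≤ 6 n u δ
    have hba : |b - a| ≤ 6 * (n : ℝ) * u * δ := by
      rw [hadef, hbdef]
      rw [show ((n : ℝ) / μ) * K - (n : ℝ) * L = (n : ℝ) * (K / μ - L) by ring]
      rw [abs_mul, abs_of_nonneg hn0]
      rw [show 6 * (n : ℝ) * u * δ = (n : ℝ) * (6 * u * δ) by ring]
      apply mul_le_mul_of_nonneg_left _ hn0
      rw [abs_le]
      constructor
      · -- -(6uδ) ≤ K/μ - L, i.e. L - K/μ ≤ 6uδ
        have h2u : 2 * u ^ 2 ≤ 2 * δ * u := by nlinarith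
        nlinarith
      · have h2v : 2 * v * (v / μ) ≤ 2 * δ * (u + δ * u) := by
          apply mul_le_mul (by nlinarith) hQu2 hvμ.le (by nlinarith)
        nlinarith
    -- min a b ≥ n u / 2
    have hmin : (n : ℝ) * u / 2 ≤ min b a := by
      apply le_min
      · rw [hbdef]
        have heq : (n : ℝ) / μ * K = (n : ℝ) * (K / μ) := by ring
        rw [heq]
        have h1 : u / 2 ≤ K / μ := by nlinarith
        have := mul_le_mul_of_nonneg_left h1 hn0
        linarith
      · rw [hadef]
        have h1 : u / 2 ≤ L := by linarith
        have := mul_le_mul_of_nonneg_left h1 hn0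
        linarith
    calc |Real.exp (-b) - Real.exp (-a)|
        ≤ |b - a| * Real.exp (-min b a) := aux_exp_diff b a
      _ ≤ (6 * (n : ℝ) * u * δ) * Real.exp (-((n : ℝ) * u / 2)) := by
          apply mul_le_mul hba (Real.exp_le_exp.2 (neg_le_neg hmin)) (Real.exp_pos _).le
          positivity
      _ = 6 * δ * (((n : ℝ) * u) * Real.exp (-(((n : ℝ) * u) / 2))) := by ring_nf
      _ ≤ 6 * δ * 2 := by
          apply mul_le_mul_of_nonneg_left (aux_self_exp _ (mul_nonneg hn0 hu0.le)) (by positivity)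
      _ = 12 * δ := by ring
  -- the vanishing part for x ≤ M
  set c : ℝ := H M ^ ((1 : ℝ) / μ) with hcdef
  have hc0 : 0 ≤ c := Real.rpow_nonneg (hH0 M) _
  have hc1 : c < 1 := Real.rpow_lt_one (hH0 M) (hHlt M) (by positivity)
  have hT : Tendsto (fun n : ℕ => c ^ n + F M ^ n) atTop (nhds 0) := by
    have h1 := tendsto_pow_atTop_nhds_zero_of_lt_one hc0 hc1
    have h2 := tendsto_pow_atTop_nhds_zero_of_lt_one (hF0 M) (hFlt M)
    simpa using h1.add h2
  obtain ⟨N, hN⟩ := Metric.tendsto_atTop.1 hT (ε / 2) (by linarith)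
  refine ⟨N, fun n hn => ?_⟩
  have hcFn : 0 ≤ c ^ n + F M ^ n :=
    add_nonneg (pow_nonneg hc0 n) (pow_nonneg (hF0 M) n)
  have hTn : c ^ n + F M ^ n < ε / 2 := by
    have := hN n hn
    rw [Real.dist_eq, sub_zero, abs_of_nonneg hcFn] at this
    exact this
  have hbound : (⨆ x : ℝ, |H x ^ ((n : ℝ) / μ) - F x ^ n|) ≤ (c ^ n + F M ^ n) + 12 * δ := by
    apply ciSup_le
    intro x
    rcases le_total M x with hx | hx
    · have := key n x hx
      linarith [hcFn]
    · have hA : H x ^ ((n : ℝ) / μ) ≤ c ^ n := by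
        have h1 : H x ^ ((n : ℝ) / μ) ≤ H M ^ ((n : ℝ) / μ) :=
          Real.rpow_le_rpow (hH0 x) (hHmono hx) (by positivity)
        have h2 : H M ^ ((n : ℝ) / μ) = c ^ n := by
          rw [hcdef, show ((n : ℝ) / μ) = (1 / μ) * (n : ℝ) by ring,
            Real.rpow_mul (hH0 M), Real.rpow_natCast]
        linarith [h2 ▸ h1]
      have hB : F x ^ n ≤ F M ^ n := pow_le_pow_left₀ (hF0 x) (hFmono hx) n
      have hA0 : 0 ≤ H x ^ ((n : ℝ) / μ) := Real.rpow_nonneg (hH0 x) _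
      have hB0 : 0 ≤ F x ^ n := pow_nonneg (hF0 x) n
      have habs : |H x ^ ((n : ℝ) / μ) - F x ^ n| ≤ H x ^ ((n : ℝ) / μ) + F x ^ n :=
        abs_le.2 ⟨by linarith, by linarith⟩
      linarith [hδ0.le]
  have hS0 : 0 ≤ ⨆ x : ℝ, |H x ^ ((n : ℝ) / μ) - F x ^ n| :=
    Real.iSup_nonneg fun x => abs_nonneg _
  rw [Real.dist_eq, sub_zero, abs_of_nonneg hS0]
  have : 12 * δ ≤ 12 * (ε / 25) := by linarith
  calc (⨆ x : ℝ, |H x ^ ((n : ℝ) / μ) - F x ^ n|)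
      ≤ (c ^ n + F M ^ n) + 12 * δ := hbound
    _ < ε / 2 + 12 * (ε / 25) := by linarith
    _ ≤ ε := by linarith
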